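/- Given a finite multiplayer information structure and a probability distribution p ∈ Δ(Ω), exactly one of the following holds: (1) p is a common prior; (2) p is a multiplayer money pump, i.e., there exists a family (f_i)_{i∈N} such that at every state the event {ω' : ∫ f_i dt_i(ω') ≥ 0 for all i} is commonly certain, and ∫ Σ_i f_i dp < 0. -/

import Mathlib

open Finset

variable {Ω : Type*} [Fintype Ω]

open Classical in
/-- The mass that a (finitely additive) distribution `p` assigns to an event `E`. -/
noncomputable def mass (p : Ω → ℝ) (E : Set Ω) : ℝ :=
  ∑ ω, if ω ∈ E then p ω else 0

/-- Expectation of `f` with respect to the distribution `q`. -/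
def expect (q f : Ω → ℝ) : ℝ := ∑ ω, q ω * f ω

/-- `p` is a probability distribution on the finite state space `Ω`. -/
def IsProbDist (p : Ω → ℝ) : Prop := (∀ ω, 0 ≤ p ω) ∧ ∑ ω, p ω = 1

/-- `part` sends each state to its partition cell. -/
def IsPartitionMap (part : Ω → Set Ω) : Prop :=
  (∀ ω, ω ∈ part ω) ∧ ∀ ω ω', ω' ∈ part ω → part ω' = part ω

/-- A single player information structure `(Ω, Π, t)`: `Π` a partition of `Ω`,
`t : Ω → Δ(Ω)` with `t ω (π ω) = 1`, and `t` constant on partition cells. -/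
def InfoStructure1 (part : Ω → Set Ω) (t : Ω → Ω → ℝ) : Prop :=
  IsPartitionMap part ∧ (∀ ω, IsProbDist (t ω)) ∧ (∀ ω, mass (t ω) (part ω) = 1) ∧
    (∀ ω ω', ω' ∈ part ω → t ω' = t ω)

/-- `p` is `(Π,t)`-disintegrable: `p (E ∩ π) = t ω E * p π` for every event `E`,
every partition cell `π` and every `ω ∈ π`. -/
def Disintegrable (part : Ω → Set Ω) (t : Ω → Ω → ℝ) (p : Ω → ℝ) : Prop :=
  ∀ (E : Set Ω) (ω : Ω), mass p (E ∩ part ω) = mass (t ω) E * mass p (part ω)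

/-- `p` is `(Π,t)`-conglomerable: for every event `E`,
`min_ω t ω E ≤ p E ≤ max_ω t ω E`. -/
def Conglomerable [Nonempty Ω] (t : Ω → Ω → ℝ) (p : Ω → ℝ) : Prop :=
  ∀ E : Set Ω,
    univ.inf' univ_nonempty (fun ω => mass (t ω) E) ≤ mass p E ∧
      mass p E ≤ univ.sup' univ_nonempty (fun ω => mass (t ω) E)

/-- A semi-trade: the player expects a nonnegative gain at every state. -/
def SemiTrade1 (t : Ω → Ω → ℝ) (f : Ω → ℝ) : Prop := ∀ ω, 0 ≤ expect (t ω) f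

/-- `p` is a money pump: some semi-trade has negative expectation under `p`. -/
def MoneyPump1 (t : Ω → Ω → ℝ) (p : Ω → ℝ) : Prop :=
  ∃ f : Ω → ℝ, SemiTrade1 t f ∧ expect p f < 0

variable {N : Type*} [Fintype N]

/-- A multiplayer information structure: each player's partition and type
function form a single player information structure. -/
def InfoStructure (part : N → Ω → Set Ω) (t : N → Ω → Ω → ℝ) : Prop :=
  ∀ i, InfoStructure1 (part i) (t i)

/-- A common certainty component: a nonempty `S` such that at each `ω ∈ S`
every player assigns probability one to some event contained in `S`. -/
def CCC (t : N → Ω → Ω → ℝ) (S : Set Ω) : Prop :=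
  S.Nonempty ∧ ∀ ω ∈ S, ∀ i, ∃ E ⊆ S, mass (t i ω) E = 1

/-- The event `E` is commonly certain at state `ω`. -/
def CommonlyCertainAt (t : N → Ω → Ω → ℝ) (E : Set Ω) (ω : Ω) : Prop :=
  ∃ S : Set Ω, CCC t S ∧ ω ∈ S ∧ S ⊆ E

/-- A common prior: a probability distribution that is a prior (i.e.
disintegrable) for every player. -/
def CommonPrior (part : N → Ω → Set Ω) (t : N → Ω → Ω → ℝ) (p : Ω → ℝ) : Prop :=
  IsProbDist p ∧ ∀ i, Disintegrable (part i) (t i) p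

/-- A universal common prior: a common prior giving positive probability to
every common certainty component. -/
def UniversalCommonPrior (part : N → Ω → Set Ω) (t : N → Ω → Ω → ℝ) (p : Ω → ℝ) : Prop :=
  CommonPrior part t p ∧ ∀ S : Set Ω, CCC t S → 0 < mass p S

/-- A strong common prior: a common prior giving positive probability to every
partition cell of every player. -/
def StrongCommonPrior (part : N → Ω → Set Ω) (t : N → Ω → Ω → ℝ) (p : Ω → ℝ) : Prop :=
  CommonPrior part t p ∧ ∀ i ω, 0 < mass p (part i ω)

/-- A trade: the payoffs sum to at most zero at every state. -/
def Trade (f : N → Ω → ℝ) : Prop := ∀ ω, ∑ i, f i ω ≤ 0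

/-- An agreeable trade: at every state each player expects a positive gain. -/
def Agreeable (t : N → Ω → Ω → ℝ) (f : N → Ω → ℝ) : Prop :=
  Trade f ∧ ∀ ω i, 0 < expect (t i ω) (f i)

/-- A weakly agreeable trade: at some state it is commonly certain that every
player expects a positive gain. -/
def WeaklyAgreeable (t : N → Ω → Ω → ℝ) (f : N → Ω → ℝ) : Prop :=
  Trade f ∧ ∃ ω, CommonlyCertainAt t {ω' | ∀ i, 0 < expect (t i ω') (f i)} ω

/-- An acceptable trade: at every state it is commonly certain that no player
expects a loss, and some player expects a strict gain at some state. -/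
def Acceptable (t : N → Ω → Ω → ℝ) (f : N → Ω → ℝ) : Prop :=
  Trade f ∧ (∀ ω, CommonlyCertainAt t {ω' | ∀ i, 0 ≤ expect (t i ω') (f i)} ω) ∧
    ∃ ω i, 0 < expect (t i ω) (f i)

/-- A multiplayer semi-trade: at every state it is commonly certain that no
player expects a loss. -/
def MSemiTrade (t : N → Ω → Ω → ℝ) (f : N → Ω → ℝ) : Prop :=
  ∀ ω, CommonlyCertainAt t {ω' | ∀ i, 0 ≤ expect (t i ω') (f i)} ω

/-- `p` is a multiplayer money pump: some semi-trade has negative total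
expectation under `p`. -/
def MMoneyPump (t : N → Ω → Ω → ℝ) (p : Ω → ℝ) : Prop :=
  ∃ f : N → Ω → ℝ, MSemiTrade t f ∧ expect p (fun ω => ∑ i, f i ω) < 0

/-- `p` is maximal: it assigns positive probability to every common certainty
component. -/
def IsMaximalDist (t : N → Ω → Ω → ℝ) (p : Ω → ℝ) : Prop :=
  ∀ S : Set Ω, CCC t S → 0 < mass p S

/-- A common prior for the information structure induced on a common certainty
component `S`: a distribution supported and normalised on `S` satisfying the
prior (disintegrability) condition for the restricted partitions and types. -/
def InducedCommonPrior (part : N → Ω → Set Ω) (t : N → Ω → Ω → ℝ)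
    (S : Set Ω) (pS : Ω → ℝ) : Prop :=
  (∀ ω, 0 ≤ pS ω) ∧ (∀ ω, ω ∉ S → pS ω = 0) ∧ mass pS S = 1 ∧
    ∀ i, ∀ E ⊆ S, ∀ ω ∈ S,
      mass pS (E ∩ (part i ω ∩ S)) = mass (t i ω) E * mass pS (part i ω ∩ S)

section AuxMoneyPump

variable {part : Ω → Set Ω} {t : Ω → Ω → ℝ}

open Classical in
lemma mass_def (q : Ω → ℝ) (A : Set Ω) :
    mass q A = ∑ ω, if ω ∈ A then q ω else 0 := rfl

lemma mass_univ' (q : Ω → ℝ) : mass q Set.univ = ∑ ω, q ω := by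
  simp [mass]

open Classical in
lemma mass_singleton' (q : Ω → ℝ) (a : Ω) : mass q {a} = q a := by
  rw [mass_def, Finset.sum_eq_single_of_mem a (Finset.mem_univ a)
    (fun b _ hb => by simp [Set.mem_singleton_iff, hb])]
  simp

open Classical in
lemma mass_add_compl' (q : Ω → ℝ) (A : Set Ω) : mass q A + mass q Aᶜ = ∑ ω, q ω := by
  rw [mass_def, mass_def, ← Finset.sum_add_distrib]
  refine Finset.sum_congr rfl fun ω _ => ?_
  by_cases h : ω ∈ A <;> simp [h]

open Classical in
lemma type_zero_outside (h : InfoStructure1 part t)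
    {ω ω'' : Ω} (hne : ω'' ∉ part ω) : t ω ω'' = 0 := by
  have hc : mass (t ω) (part ω)ᶜ = 0 := by
    have h1 := mass_add_compl' (t ω) (part ω)
    rw [h.2.2.1 ω, (h.2.1 ω).2] at h1
    linarith
  rw [mass_def] at hc
  have h0 : ∀ x ∈ Finset.univ (α := Ω),
      (0:ℝ) ≤ @ite ℝ (x ∈ (part ω)ᶜ) (Classical.propDecidable _) (t ω x) 0 := by
    intro x _
    split
    · exact (h.2.1 ω).1 x
    · exact le_refl 0
  have h2 := (Finset.sum_eq_zero_iff_of_nonneg h0).mp hc ω'' (Finset.mem_univ _)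
  rwa [if_pos (Set.mem_compl hne)] at h2

lemma not_mem_symm (hpm : IsPartitionMap part) {ω ω' : Ω} (h : ω ∉ part ω') :
    ω' ∉ part ω := by
  intro hx
  exact h ((hpm.2 ω ω' hx).symm ▸ hpm.1 ω)

open Classical in
lemma mass_type_inter (h : InfoStructure1 part t) (ω0 : Ω) (E : Set Ω) :
    mass (t ω0) (E ∩ part ω0) = mass (t ω0) E := by
  rw [mass_def, mass_def]
  refine Finset.sum_congr rfl fun x _ => ?_
  by_cases hE : x ∈ E
  · by_cases hP : x ∈ part ω0
    · simp [hE, hP]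
    · simp [hE, hP, type_zero_outside h hP]
  · simp [hE]

lemma cell_disjoint (hpm : IsPartitionMap part) {ω ω0 : Ω}
    (h : ω ∉ part ω0) {x : Ω} (hx : x ∈ part ω0) : x ∉ part ω := by
  intro hx'
  have e1 := hpm.2 ω x hx'
  have e2 := hpm.2 ω0 x hx
  have e3 : part ω = part ω0 := by rw [← e1, e2]
  exact h (e3 ▸ hpm.1 ω)

open Classical in
lemma mass_cases (h : InfoStructure1 part t) (ω ω0 : Ω) (E : Set Ω) :
    mass (t ω) (E ∩ part ω0) = (if ω ∈ part ω0 then mass (t ω0) E else 0) := by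
  by_cases hm : ω ∈ part ω0
  · have ht : t ω = t ω0 := h.2.2.2 ω0 ω hm
    rw [if_pos hm, ht]
    exact mass_type_inter h ω0 E
  · rw [if_neg hm, mass_def]
    apply Finset.sum_eq_zero
    intro x _
    by_cases hx : x ∈ E ∩ part ω0
    · rw [if_pos hx, type_zero_outside h (cell_disjoint h.1 hm hx.2)]
    · rw [if_neg hx]

open Classical in
lemma mass_mix (t : Ω → Ω → ℝ) (p lam : Ω → ℝ)
    (hmix : ∀ ω', p ω' = ∑ ω, lam ω * t ω ω') (A : Set Ω) :
    mass p A = ∑ ω, lam ω * mass (t ω) A := by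
  rw [mass_def]
  calc ∑ ω', (if ω' ∈ A then p ω' else 0)
      = ∑ ω', ∑ ω, (if ω' ∈ A then lam ω * t ω ω' else 0) := by
        refine Finset.sum_congr rfl fun ω' _ => ?_
        by_cases hA : ω' ∈ A
        · rw [if_pos hA, hmix ω']
          exact Finset.sum_congr rfl fun ω _ => by rw [if_pos hA]
        · simp [hA]
    _ = ∑ ω, ∑ ω', (if ω' ∈ A then lam ω * t ω ω' else 0) := Finset.sum_comm
    _ = ∑ ω, lam ω * mass (t ω) A := by
        refine Finset.sum_congr rfl fun ω _ => ?_
        rw [mass_def, Finset.mul_sum]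
        refine Finset.sum_congr rfl fun ω' _ => ?_
        by_cases hA : ω' ∈ A <;> simp [hA]

open Classical in
lemma disint_of_mix (h : InfoStructure1 part t) (p lam : Ω → ℝ)
    (hmix : ∀ ω', p ω' = ∑ ω, lam ω * t ω ω') : Disintegrable part t p := by
  intro E ω0
  have key : ∀ F : Set Ω,
      mass p (F ∩ part ω0) = mass (t ω0) F * mass lam (part ω0) := by
    intro F
    rw [mass_mix t p lam hmix]
    have hterm : ∀ ω, lam ω * mass (t ω) (F ∩ part ω0)
        = mass (t ω0) F * (if ω ∈ part ω0 then lam ω else 0) := by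
      intro ω
      rw [mass_cases h ω ω0 F]
      by_cases hm : ω ∈ part ω0
      · rw [if_pos hm, if_pos hm, mul_comm]
      · rw [if_neg hm, if_neg hm, mul_zero, mul_zero]
    rw [Finset.sum_congr rfl fun ω _ => hterm ω, ← Finset.mul_sum,
      mass_def lam (part ω0)]
  have h2 : mass p (part ω0) = mass lam (part ω0) := by
    have hu := key Set.univ
    rwa [Set.univ_inter, mass_univ', (h.2.1 ω0).2, one_mul] at hu
  rw [h2]
  exact key E

open Classical in
lemma mix_of_mem_hull (t : Ω → Ω → ℝ) (p : Ω → ℝ)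
    (hp : p ∈ convexHull ℝ (Set.range t)) :
    ∃ lam : Ω → ℝ, ∀ ω', p ω' = ∑ ω, lam ω * t ω ω' := by
  have hsub : Set.range t ⊆
      {q : Ω → ℝ | ∃ lam : Ω → ℝ, ∀ ω', q ω' = ∑ ω, lam ω * t ω ω'} := by
    rintro _ ⟨ω0, rfl⟩
    refine ⟨fun ω => if ω = ω0 then 1 else 0, fun ω' => ?_⟩
    show t ω0 ω' = ∑ ω, (if ω = ω0 then (1:ℝ) else 0) * t ω ω'
    rw [Finset.sum_eq_single_of_mem ω0 (Finset.mem_univ ω0)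
      (fun b _ hb => by rw [if_neg hb, zero_mul]), if_pos rfl, one_mul]
  have hconv : Convex ℝ
      {q : Ω → ℝ | ∃ lam : Ω → ℝ, ∀ ω', q ω' = ∑ ω, lam ω * t ω ω'} := by
    rintro q1 ⟨l1, hq1⟩ q2 ⟨l2, hq2⟩ a b _ _ _
    refine ⟨fun ω => a * l1 ω + b * l2 ω, fun ω' => ?_⟩
    simp only [Pi.add_apply, Pi.smul_apply, smul_eq_mul]
    rw [hq1, hq2, Finset.mul_sum, Finset.mul_sum, ← Finset.sum_add_distrib]
    exact Finset.sum_congr rfl fun ω _ => by ring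
  exact convexHull_min hsub hconv hp

open Classical in
/-- delta vector at a point -/
noncomputable def deltaVec (a : Ω) : Ω → ℝ := fun x => if a = x then 1 else 0

open Classical in
lemma separating (t : Ω → Ω → ℝ) (p : Ω → ℝ)
    (hnot : p ∉ convexHull ℝ (Set.range t))
    (hps : ∑ ω, p ω = 1) (hts : ∀ ω, ∑ ω', t ω ω' = 1) :
    ∃ g : Ω → ℝ, (∀ ω, 0 ≤ expect (t ω) g) ∧ expect p g < 0 := by
  obtain ⟨f, u, hfs, hfp⟩ := geometric_hahn_banach_closed_point
    (convex_convexHull ℝ _) (((Set.finite_range t).isCompact_convexHull (𝕜 := ℝ)).isClosed) hnot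
  have hrep : ∀ q : Ω → ℝ, f q = ∑ ω', q ω' * f (deltaVec ω') := by
    intro q
    have hq : q = ∑ ω', q ω' • deltaVec ω' := by
      funext x
      rw [Finset.sum_apply]
      rw [Finset.sum_eq_single_of_mem x (Finset.mem_univ x)
        (fun b _ hb => by simp [deltaVec, hb])]
      simp [deltaVec]
    calc f q = f (∑ ω', q ω' • deltaVec ω') := by rw [← hq]
      _ = ∑ ω', q ω' * f (deltaVec ω') := by
          rw [map_sum]
          exact Finset.sum_congr rfl fun ω' _ => by rw [map_smul, smul_eq_mul]
  have hexp : ∀ q : Ω → ℝ,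
      expect q (fun ω' => u - f (deltaVec ω')) = (∑ ω', q ω') * u - f q := by
    intro q
    calc expect q (fun ω' => u - f (deltaVec ω'))
        = ∑ ω', (q ω' * u - q ω' * f (deltaVec ω')) := by
          show (∑ ω', q ω' * (u - f (deltaVec ω')))
            = ∑ ω', (q ω' * u - q ω' * f (deltaVec ω'))
          exact Finset.sum_congr rfl fun ω' _ => by ring
      _ = (∑ ω', q ω') * u - f q := by
          rw [Finset.sum_sub_distrib, ← Finset.sum_mul, hrep q]
  refine ⟨fun ω' => u - f (deltaVec ω'), fun ω => ?_, ?_⟩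
  · rw [hexp (t ω), hts ω, one_mul]
    have := hfs (t ω) (subset_convexHull ℝ _ (Set.mem_range_self ω))
    linarith
  · rw [hexp p, hps, one_mul]
    linarith

lemma prob_eq_cell (h : InfoStructure1 part t) {p : Ω → ℝ}
    (hd : Disintegrable part t p) (ω' : Ω) :
    p ω' = t ω' ω' * mass p (part ω') := by
  have h1 := hd {ω'} ω'
  rw [Set.inter_eq_left.mpr (Set.singleton_subset_iff.mpr (h.1.1 ω'))] at h1
  rw [mass_singleton'] at h1
  rw [h1, mass_singleton']

open Classical in
lemma expect_eq_sum_cells (h : InfoStructure1 part t) {p : Ω → ℝ}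
    (hd : Disintegrable part t p) (f : Ω → ℝ) :
    expect p f = ∑ ω, p ω * expect (t ω) f := by
  have step1 : ∀ ω', p ω' = ∑ ω, p ω * t ω ω' := by
    intro ω'
    have hpt : ∀ ω, p ω * t ω ω' = (if ω ∈ part ω' then p ω else 0) * t ω' ω' := by
      intro ω
      by_cases hm : ω ∈ part ω'
      · rw [if_pos hm, h.2.2.2 ω' ω hm]
      · rw [if_neg hm, zero_mul, type_zero_outside h (not_mem_symm h.1 hm), mul_zero]
    rw [Finset.sum_congr rfl fun ω _ => hpt ω, ← Finset.sum_mul,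
      prob_eq_cell h hd ω', mass_def, mul_comm]
  calc expect p f = ∑ ω', (∑ ω, p ω * t ω ω') * f ω' := by
        show (∑ ω', p ω' * f ω') = ∑ ω', (∑ ω, p ω * t ω ω') * f ω'
        exact Finset.sum_congr rfl fun ω' _ => by rw [← step1 ω']
    _ = ∑ ω', ∑ ω, p ω * (t ω ω' * f ω') := by
        refine Finset.sum_congr rfl fun ω' _ => ?_
        rw [Finset.sum_mul]
        exact Finset.sum_congr rfl fun ω _ => by ring
    _ = ∑ ω, ∑ ω', p ω * (t ω ω' * f ω') := Finset.sum_comm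
    _ = ∑ ω, p ω * expect (t ω) f := by
        refine Finset.sum_congr rfl fun ω _ => ?_
        show (∑ ω', p ω * (t ω ω' * f ω')) = p ω * ∑ ω', t ω ω' * f ω'
        rw [Finset.mul_sum]

end AuxMoneyPump

/-- exactly one of the following holds: `p` is a common prior, or
`p` is a multiplayer money pump. -/
theorem commonPrior_xor_moneyPump (part : N → Ω → Set Ω) (t : N → Ω → Ω → ℝ)
    (hT : InfoStructure part t) (p : Ω → ℝ) (hp : IsProbDist p) :
    Xor' (CommonPrior part t p) (MMoneyPump t p) := by
  classical
  by_cases hcp : CommonPrior part t p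
  · left
    refine ⟨hcp, ?_⟩
    rintro ⟨f, hsemi, hneg⟩
    have hgood : ∀ ω i, 0 ≤ expect (t i ω) (f i) := by
      intro ω i
      obtain ⟨S, _, hωS, hsub⟩ := hsemi ω
      exact hsub hωS i
    have hsplit : expect p (fun ω => ∑ i, f i ω) = ∑ i, expect p (f i) := by
      show (∑ ω, p ω * ∑ i, f i ω) = ∑ i, expect p (f i)
      calc ∑ ω, p ω * ∑ i, f i ω = ∑ ω, ∑ i, p ω * f i ω :=
            Finset.sum_congr rfl fun ω _ => Finset.mul_sum _ _ _
        _ = ∑ i, ∑ ω, p ω * f i ω := Finset.sum_comm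
        _ = ∑ i, expect p (f i) := rfl
    have hnn : 0 ≤ expect p (fun ω => ∑ i, f i ω) := by
      rw [hsplit]
      refine Finset.sum_nonneg fun i _ => ?_
      rw [expect_eq_sum_cells (hT i) (hcp.2 i) (f i)]
      exact Finset.sum_nonneg fun ω _ => mul_nonneg (hp.1 ω) (hgood ω i)
    linarith
  · right
    refine ⟨?_, hcp⟩
    have hbad : ∃ i, ¬ Disintegrable (part i) (t i) p := by
      by_contra hall
      push_neg at hall
      exact hcp ⟨hp, hall⟩
    obtain ⟨i0, hi0⟩ := hbad
    have hnot : p ∉ convexHull ℝ (Set.range (t i0)) := by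
      intro hmem
      obtain ⟨lam, hmix⟩ := mix_of_mem_hull (t i0) p hmem
      exact hi0 (disint_of_mix (hT i0) p lam hmix)
    obtain ⟨g, hg0, hgneg⟩ :=
      separating (t i0) p hnot hp.2 (fun ω => ((hT i0).2.1 ω).2)
    refine ⟨fun i => if i = i0 then g else 0, ?_, ?_⟩
    · intro ω
      refine ⟨Set.univ, ⟨⟨ω, trivial⟩, fun ω' _ i => ?_⟩, trivial, fun ω' _ i => ?_⟩
      · exact ⟨Set.univ, subset_rfl, by rw [mass_univ']; exact ((hT i).2.1 ω').2⟩
      · by_cases hi : i = i0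
        · subst hi
          simpa using hg0 ω'
        · have h0 : _root_.expect (t i ω') (0 : Ω → ℝ) = 0 :=
            Finset.sum_eq_zero fun x _ => by simp
          simp only [hi, if_false, ite_false]
          exact le_of_eq h0.symm
    · have he : expect p (fun ω => ∑ i, (if i = i0 then g else (0 : Ω → ℝ)) ω)
          = expect p g := by
        show (∑ ω, p ω * ∑ i, (if i = i0 then g else (0 : Ω → ℝ)) ω)
          = ∑ ω, p ω * g ω
        refine Finset.sum_congr rfl fun ω _ => ?_
        congr 1
        rw [Finset.sum_eq_single_of_mem i0 (Finset.mem_univ i0)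
          (fun b _ hb => by simp [hb]), if_pos rfl]
      rw [he]
      exact hgneg
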